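/- The final state of the which-path-detector circuit satisfies the closed-form product formula: P_{n+1}·B_{n+1}·(P_n·C_n·B_n) ⋯ (P_1·C_1·B_1) applied to |0⟩ ⊗ |D_n⟩ ⊗ ⋯ ⊗ |D_1⟩ equals Σ over all bit tuples (j₁, …, j_{n+1}) ∈ {0,1}^{n+1} of K_{j₁}·(Π_{k=1}^{n} χ_{k+1, j_k, j_{k+1}}) · |j_{n+1}⟩ ⊗ (U_{n,j_n}|D_n⟩) ⊗ ⋯ ⊗ (U_{1,j_1}|D_1⟩). -/

import Mathlib

open Complex Matrix

/-- The beam-splitter matrix `B_k = [[cos θ, i sin θ],[i sin θ, cos θ]]`. -/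
noncomputable def bsMat (θ : ℝ) : Matrix (Fin 2) (Fin 2) ℂ :=
  !![(Real.cos θ : ℂ), I * Real.sin θ; I * Real.sin θ, (Real.cos θ : ℂ)]

/-- The phase-shift matrix `P_k = diag(e^{iφ₀}, e^{iφ₁})`. -/
noncomputable def psMat (φ₀ φ₁ : ℝ) : Matrix (Fin 2) (Fin 2) ℂ :=
  !![Complex.exp (I * φ₀), 0; 0, Complex.exp (I * φ₁)]

/-- A single-qubit gate `A` acting on the photon factor of `ℂ² ⊗ (ℂ²)^{⊗n}` (the state
space is indexed by pairs `(photon index, detector indices)`). -/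
noncomputable def photonOp (n : ℕ) (A : Matrix (Fin 2) (Fin 2) ℂ) :
    Matrix (Fin 2 × (Fin n → Fin 2)) (Fin 2 × (Fin n → Fin 2)) ℂ :=
  fun p q => if p.2 = q.2 then A p.1 q.1 else 0

/-- The controlled gate `C_k = |0⟩⟨0| ⊗ U 0 + |1⟩⟨1| ⊗ U 1` acting on the photon factor
and the `k`-th detector factor (identity elsewhere). -/
noncomputable def ctrlOp (n : ℕ) (k : Fin n) (U : Fin 2 → Matrix (Fin 2) (Fin 2) ℂ) :
    Matrix (Fin 2 × (Fin n → Fin 2)) (Fin 2 × (Fin n → Fin 2)) ℂ :=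
  fun p q => if p.1 = q.1 ∧ ∀ l, l ≠ k → p.2 l = q.2 l
    then U p.1 (p.2 k) (q.2 k) else 0

/-- The `k`-th step `P_k · C_k · B_k` of the which-path-detector circuit (detector `k+1`
in 1-based numbering corresponds to `k : Fin n`). -/
noncomputable def wpdStep (n : ℕ) (θ : ℕ → ℝ) (φ : ℕ → Fin 2 → ℝ)
    (U : ℕ → Fin 2 → Matrix (Fin 2) (Fin 2) ℂ) (k : Fin n) :
    Matrix (Fin 2 × (Fin n → Fin 2)) (Fin 2 × (Fin n → Fin 2)) ℂ :=
  photonOp n (psMat (φ ((k : ℕ) + 1) 0) (φ ((k : ℕ) + 1) 1)) *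
    ctrlOp n k (U ((k : ℕ) + 1)) * photonOp n (bsMat (θ ((k : ℕ) + 1)))

/-- The ordered product `(P_k C_k B_k) ⋯ (P_1 C_1 B_1)`. -/
noncomputable def wpdProd (n : ℕ) (θ : ℕ → ℝ) (φ : ℕ → Fin 2 → ℝ)
    (U : ℕ → Fin 2 → Matrix (Fin 2) (Fin 2) ℂ) :
    ℕ → Matrix (Fin 2 × (Fin n → Fin 2)) (Fin 2 × (Fin n → Fin 2)) ℂ
  | 0 => 1
  | k + 1 => (if h : k < n then wpdStep n θ φ U ⟨k, h⟩ else 1) * wpdProd n θ φ U k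

/-- `c̃_{k,j} = cos θ_k · e^{iφ_{k,j}}`. -/
noncomputable def ctil (θ : ℕ → ℝ) (φ : ℕ → Fin 2 → ℝ) (k : ℕ) (j : Fin 2) : ℂ :=
  (Real.cos (θ k) : ℂ) * Complex.exp (I * φ k j)

/-- `s̃_{k,j} = i · sin θ_k · e^{iφ_{k,j}}`. -/
noncomputable def stil (θ : ℕ → ℝ) (φ : ℕ → Fin 2 → ℝ) (k : ℕ) (j : Fin 2) : ℂ :=
  I * Real.sin (θ k) * Complex.exp (I * φ k j)

/-- `χ_{k,a,b} = c̃_{k,b}` if `a = b` and `s̃_{k,b}` if `a ≠ b`. -/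
noncomputable def chi (θ : ℕ → ℝ) (φ : ℕ → Fin 2 → ℝ) (k : ℕ) (a b : Fin 2) : ℂ :=
  if a = b then ctil θ φ k b else stil θ φ k b

noncomputable def prodVec (n : ℕ) (j : Fin 2) (f : Fin n → Fin 2 → ℂ) :
    Fin 2 × (Fin n → Fin 2) → ℂ :=
  fun p => (if p.1 = j then 1 else 0) * ∏ k, f k (p.2 k)

lemma photon_apply (n : ℕ) (A : Matrix (Fin 2) (Fin 2) ℂ) (j : Fin 2)
    (f : Fin n → Fin 2 → ℂ) :
    photonOp n A *ᵥ prodVec n j f = ∑ b : Fin 2, A b j • prodVec n b f := by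
  funext p
  simp only [mulVec, dotProduct, photonOp, prodVec, Fintype.sum_prod_type]
  rw [Finset.sum_comm]
  simp only [ite_mul, zero_mul, Finset.sum_ite_eq, Finset.mem_univ, if_true]
  simp only [Finset.sum_apply, Pi.smul_apply, smul_eq_mul, prodVec]
  obtain ⟨a, g⟩ := p
  fin_cases a <;> fin_cases j <;> simp

lemma ps_apply (n : ℕ) (φ₀ φ₁ : ℝ) (j : Fin 2) (f : Fin n → Fin 2 → ℂ) :
    photonOp n (psMat φ₀ φ₁) *ᵥ prodVec n j f =
      Complex.exp (I * (if j = 0 then (φ₀ : ℂ) else (φ₁ : ℂ))) • prodVec n j f := by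
  rw [photon_apply, Fin.sum_univ_two]
  fin_cases j <;> simp [psMat]

lemma mulVec_sum_fin2 {P : Type*} [Fintype P] (M : Matrix P P ℂ)
    (w : Fin 2 → ℂ) (v : Fin 2 → P → ℂ) :
    M *ᵥ (∑ b, w b • v b) = ∑ b, w b • (M *ᵥ v b) := by
  rw [Fin.sum_univ_two, Fin.sum_univ_two, mulVec_add, mulVec_smul, mulVec_smul]

lemma mulVec_sum' {P ι : Type*} [Fintype P] [Fintype ι] (M : Matrix P P ℂ)
    (v : ι → P → ℂ) : M *ᵥ ∑ i, v i = ∑ i, M *ᵥ v i := by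
  funext p
  simp only [mulVec, dotProduct, Finset.sum_apply, Finset.mul_sum]
  rw [Finset.sum_comm]

lemma chi_factor (θ : ℕ → ℝ) (φ : ℕ → Fin 2 → ℝ) (m : ℕ) (j b : Fin 2) :
    chi θ φ m j b =
      Complex.exp (I * (if b = 0 then (φ m 0 : ℂ) else (φ m 1 : ℂ))) * bsMat (θ m) b j := by
  fin_cases j <;> fin_cases b <;> simp [chi, ctil, stil, bsMat] <;> ring

lemma sum_cond (n : ℕ) (k : Fin n) (p2 : Fin n → Fin 2) (X : (Fin n → Fin 2) → ℂ) :
    ∑ g : Fin n → Fin 2, (if ∀ l, l ≠ k → p2 l = g l then X g else 0) =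
      ∑ c : Fin 2, X (Function.update p2 k c) := by
  have key : ∀ g : Fin n → Fin 2,
      (if ∀ l, l ≠ k → p2 l = g l then X g else 0) =
        ∑ c : Fin 2, if g = Function.update p2 k c then X g else 0 := by
    intro g
    by_cases hC : ∀ l, l ≠ k → p2 l = g l
    · rw [if_pos hC]
      have h1 : ∀ c : Fin 2, g = Function.update p2 k c ↔ c = g k := by
        intro c
        constructor
        · intro h; rw [h]; simp
        · intro h; funext l
          by_cases hl : l = k
          · subst hl; simp [h]
          · simp [Function.update_of_ne hl, (hC l hl).symm]
      simp only [h1]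
      simp
    · rw [if_neg hC]
      symm
      apply Finset.sum_eq_zero
      intro c _
      rw [if_neg]
      intro h
      exact hC (by intro l hl; rw [h]; simp [Function.update_of_ne hl])
  rw [Finset.sum_congr rfl fun g _ => key g, Finset.sum_comm]
  apply Finset.sum_congr rfl
  intro c _
  simp

lemma prod_update_eval (n : ℕ) (k : Fin n) (f : Fin n → Fin 2 → ℂ) (w : Fin 2 → ℂ)
    (g : Fin n → Fin 2) :
    ∏ k', Function.update f k w k' (g k') =
      w (g k) * ∏ k' ∈ Finset.univ.erase k, f k' (g k') := by
  rw [← Finset.mul_prod_erase Finset.univ (fun k' => Function.update f k w k' (g k'))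
    (Finset.mem_univ k)]
  simp only [Function.update_self]
  congr 1
  apply Finset.prod_congr rfl
  intro k' hk'
  rw [Function.update_of_ne (Finset.ne_of_mem_erase hk')]

lemma prod_updatePt_eval (n : ℕ) (k : Fin n) (f : Fin n → Fin 2 → ℂ) (c : Fin 2)
    (p2 : Fin n → Fin 2) :
    ∏ k', f k' (Function.update p2 k c k') =
      f k c * ∏ k' ∈ Finset.univ.erase k, f k' (p2 k') := by
  rw [← Finset.mul_prod_erase Finset.univ (fun k' => f k' (Function.update p2 k c k'))
    (Finset.mem_univ k)]
  simp only [Function.update_self]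
  congr 1
  apply Finset.prod_congr rfl
  intro k' hk'
  rw [Function.update_of_ne (Finset.ne_of_mem_erase hk')]

lemma ctrl_apply (n : ℕ) (k : Fin n) (Us : Fin 2 → Matrix (Fin 2) (Fin 2) ℂ)
    (j : Fin 2) (f : Fin n → Fin 2 → ℂ) :
    ctrlOp n k Us *ᵥ prodVec n j f =
      prodVec n j (Function.update f k (Us j *ᵥ f k)) := by
  funext p
  simp only [mulVec, dotProduct, ctrlOp, prodVec, Fintype.sum_prod_type]
  simp only [ite_and, ite_mul, zero_mul]
  rw [Finset.sum_comm]
  simp only [Finset.sum_ite_eq, Finset.mem_univ, if_true]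
  rw [sum_cond n k p.2
    (fun g => Us p.1 (p.2 k) (g k) * if p.1 = j then 1 * ∏ k', f k' (g k') else 0)]
  by_cases hp : p.1 = j
  · simp only [if_pos hp, one_mul, hp]
    rw [prod_update_eval]
    simp only [Function.update_self]
    rw [Matrix.mulVec, dotProduct, Finset.sum_mul]
    apply Finset.sum_congr rfl
    intro c _
    rw [prod_updatePt_eval]
    simp only [if_true]
    ring
  · simp [hp]

lemma step_apply (n : ℕ) (θ : ℕ → ℝ) (φ : ℕ → Fin 2 → ℝ)
    (U : ℕ → Fin 2 → Matrix (Fin 2) (Fin 2) ℂ) (k : Fin n) (j : Fin 2)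
    (f : Fin n → Fin 2 → ℂ) :
    wpdStep n θ φ U k *ᵥ prodVec n j f =
      ∑ b : Fin 2, chi θ φ ((k : ℕ) + 1) j b •
        prodVec n b (Function.update f k (U ((k : ℕ) + 1) b *ᵥ f k)) := by
  unfold wpdStep
  rw [← Matrix.mulVec_mulVec, ← Matrix.mulVec_mulVec, photon_apply, mulVec_sum_fin2]
  simp only [ctrl_apply]
  rw [mulVec_sum_fin2]
  apply Finset.sum_congr rfl
  intro b _
  rw [ps_apply, smul_smul, chi_factor, mul_comm]

lemma coef_snoc (θ : ℕ → ℝ) (φ : ℕ → Fin 2 → ℝ) (t : ℕ) (jt : Fin (t+1) → Fin 2)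
    (b : Fin 2) :
    (∏ k : Fin (t+1), chi θ φ ((k : ℕ) + 2) ((Fin.snoc jt b : Fin (t+2) → Fin 2) k.castSucc)
        ((Fin.snoc jt b : Fin (t+2) → Fin 2) k.succ)) =
      (∏ k : Fin t, chi θ φ ((k : ℕ) + 2) (jt k.castSucc) (jt k.succ)) *
        chi θ φ (t + 2) (jt (Fin.last t)) b := by
  rw [Fin.prod_univ_castSucc]
  congr 1
  · apply Finset.prod_congr rfl
    intro k _
    simp [-Fin.castSucc_succ, Fin.succ_castSucc, Fin.snoc_castSucc]
  · simp [Fin.snoc_castSucc, Fin.snoc_last, Fin.succ_last]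

lemma sum_snoc {m : ℕ} {M : Type*} [AddCommMonoid M] (F : (Fin (m+1) → Fin 2) → M) :
    ∑ jt, F jt = ∑ jt₀ : Fin m → Fin 2, ∑ b : Fin 2, F (Fin.snoc jt₀ b) := by
  rw [← Equiv.sum_comp (Fin.snocEquiv (fun _ => Fin 2)) F, Fintype.sum_prod_type,
    Finset.sum_comm]
  simp [Fin.snocEquiv]

lemma snoc_zero' (t : ℕ) (jt : Fin (t+1) → Fin 2) (b : Fin 2) :
    (Fin.snoc jt b : Fin (t+2) → Fin 2) 0 = jt 0 := by
  rw [← Fin.castSucc_zero, Fin.snoc_castSucc]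

lemma prodVec_ext (n : ℕ) {j₁ j₂ : Fin 2} {f₁ f₂ : Fin n → Fin 2 → ℂ}
    (hj : j₁ = j₂) (hf : ∀ k, f₁ k = f₂ k) :
    prodVec n j₁ f₁ = prodVec n j₂ f₂ := by
  subst hj
  exact congrArg _ (funext hf)

lemma wpd_state (n : ℕ) (θ : ℕ → ℝ) (φ : ℕ → Fin 2 → ℝ)
    (U : ℕ → Fin 2 → Matrix (Fin 2) (Fin 2) ℂ) (D : Fin n → Fin 2 → ℂ) :
    ∀ t, t < n →
    wpdProd n θ φ U (t+1) *ᵥ prodVec n 0 D =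
      ∑ jt : Fin (t+1) → Fin 2,
        ((if jt 0 = 0 then ctil θ φ 1 0 else stil θ φ 1 1) *
          ∏ k : Fin t, chi θ φ ((k : ℕ) + 2) (jt k.castSucc) (jt k.succ)) •
        prodVec n (jt (Fin.last t))
          (fun k => if h : (k : ℕ) < t + 1 then U ((k : ℕ) + 1) (jt ⟨k, h⟩) *ᵥ D k
            else D k) := by
  intro t
  induction t with
  | zero =>
    intro ht
    rw [show wpdProd n θ φ U 1 = wpdStep n θ φ U ⟨0, ht⟩ from by
      simp [wpdProd, ht]]
    rw [step_apply]
    conv_rhs => rw [sum_snoc, Fintype.sum_unique]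
    apply Finset.sum_congr rfl
    intro b _
    have hsb : ∀ (g : Fin 0 → Fin 2) (i : Fin 1),
        (Fin.snoc g b : Fin 1 → Fin 2) i = b := by
      intro g i
      have : i = Fin.last 0 := Subsingleton.elim _ _
      rw [this, Fin.snoc_last]
    congr 1
    · rw [hsb]
      rw [show chi θ φ (((⟨0, ht⟩ : Fin n) : ℕ) + 1) 0 b = chi θ φ 1 0 b from rfl]
      fin_cases b <;> simp [chi]
    · refine prodVec_ext n (by rw [hsb]) ?_
      intro k
      by_cases hk : (k : ℕ) < 1
      · have hk0 : k = ⟨0, ht⟩ := Fin.ext (Nat.lt_one_iff.mp hk)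
        subst hk0
        rw [Function.update_self, dif_pos hk, hsb]
      · have hk0 : k ≠ ⟨0, ht⟩ := by
          intro h
          exact hk (by rw [h]; norm_num)
        rw [Function.update_of_ne hk0, dif_neg hk]
  | succ t ihp =>
    intro ht
    have ht' : t < n := Nat.lt_of_succ_lt ht
    rw [show wpdProd n θ φ U (t+2) = wpdStep n θ φ U ⟨t+1, ht⟩ * wpdProd n θ φ U (t+1)
      from by simp [wpdProd, ht]]
    rw [← Matrix.mulVec_mulVec, ihp ht', mulVec_sum']
    simp only [mulVec_smul, step_apply, Finset.smul_sum, smul_smul]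
    conv_rhs => rw [sum_snoc]
    apply Finset.sum_congr rfl
    intro jt _
    apply Finset.sum_congr rfl
    intro b _
    congr 1
    · rw [snoc_zero', coef_snoc]
      rw [show ((⟨t+1, ht⟩ : Fin n) : ℕ) + 1 = t + 2 from rfl]
      ring
    · refine prodVec_ext n (by rw [Fin.snoc_last]) ?_
      intro k
      by_cases hk1 : (k : ℕ) < t + 1
      · have hkne : k ≠ ⟨t+1, ht⟩ := by
          intro h
          rw [h] at hk1
          simp at hk1
        rw [Function.update_of_ne hkne, dif_pos hk1,
          dif_pos (Nat.lt_succ_of_lt hk1)]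
        congr 2
        rw [show (⟨(k : ℕ), Nat.lt_succ_of_lt hk1⟩ : Fin (t+2))
            = Fin.castSucc ⟨(k : ℕ), hk1⟩ from rfl, Fin.snoc_castSucc]
      · by_cases hk2 : (k : ℕ) = t + 1
        · have hkk : k = ⟨t+1, ht⟩ := Fin.ext hk2
          subst hkk
          rw [Function.update_self,
            dif_pos (by omega : ((⟨t+1, ht⟩ : Fin n) : ℕ) < t + 1 + 1),
            dif_neg (by omega : ¬ ((⟨t+1, ht⟩ : Fin n) : ℕ) < t + 1)]
          congr 2
          rw [show (⟨((⟨t+1, ht⟩ : Fin n) : ℕ), by omega⟩ : Fin (t+2)) = Fin.last (t+1)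
            from rfl, Fin.snoc_last]
        · have hkne : k ≠ ⟨t+1, ht⟩ := by
            intro h
            exact hk2 (by rw [h])
          rw [Function.update_of_ne hkne, dif_neg hk1, dif_neg (by omega)]

lemma pb_apply (n : ℕ) (θ : ℕ → ℝ) (φ : ℕ → Fin 2 → ℝ) (m : ℕ) (j : Fin 2)
    (f : Fin n → Fin 2 → ℂ) :
    (photonOp n (psMat (φ m 0) (φ m 1)) * photonOp n (bsMat (θ m))) *ᵥ prodVec n j f =
      ∑ b : Fin 2, chi θ φ m j b • prodVec n b f := by
  rw [← Matrix.mulVec_mulVec, photon_apply, mulVec_sum_fin2]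
  apply Finset.sum_congr rfl
  intro b _
  rw [ps_apply, smul_smul, chi_factor, mul_comm]

/-- The final state of the which-path-detector circuit satisfies the
closed-form product formula: `P_{n+1}·B_{n+1}·(P_n C_n B_n) ⋯ (P_1 C_1 B_1)` applied to
`|0⟩ ⊗ |D_n⟩ ⊗ ⋯ ⊗ |D_1⟩` equals the sum over bit tuples `(j₁, …, j_{n+1}) ∈ {0,1}^{n+1}`
(here `jt : Fin (n+1) → Fin 2`, with `jt (k−1) = j_k`) of
`K_{j₁} · (Π_{k=1}^{n} χ_{k+1, j_k, j_{k+1}}) · |j_{n+1}⟩ ⊗ (U_{n,j_n}|D_n⟩) ⊗ ⋯ ⊗ (U_{1,j_1}|D_1⟩)`,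
where `K₀ = c̃_{1,0}` and `K₁ = s̃_{1,1}`. -/
theorem stmt14 (n : ℕ) (hn : 1 ≤ n) (θ : ℕ → ℝ) (φ : ℕ → Fin 2 → ℝ)
    (U : ℕ → Fin 2 → Matrix (Fin 2) (Fin 2) ℂ)
    (hU : ∀ k j, U k j ∈ Matrix.unitaryGroup (Fin 2) ℂ)
    (D : Fin n → Fin 2 → ℂ)
    (hD : ∀ k, ‖D k 0‖ ^ 2 + ‖D k 1‖ ^ 2 = 1) :
    let Kcoef : Fin 2 → ℂ := fun j => if j = 0 then ctil θ φ 1 0 else stil θ φ 1 1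
    let ψ₀ : Fin 2 × (Fin n → Fin 2) → ℂ :=
      fun p => (if p.1 = 0 then 1 else 0) * ∏ k, D k (p.2 k)
    (photonOp n (psMat (φ (n + 1) 0) (φ (n + 1) 1)) * photonOp n (bsMat (θ (n + 1))) *
        wpdProd n θ φ U n) *ᵥ ψ₀ =
      ∑ jt : Fin (n + 1) → Fin 2,
        (Kcoef (jt 0) * ∏ k : Fin n, chi θ φ ((k : ℕ) + 2) (jt k.castSucc) (jt k.succ)) •
          (fun p : Fin 2 × (Fin n → Fin 2) =>
            (if p.1 = jt (Fin.last n) then 1 else 0) *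
              ∏ k : Fin n, (U ((k : ℕ) + 1) (jt k.castSucc) *ᵥ D k) (p.2 k)) := by
  intro Kcoef ψ₀
  obtain ⟨t, rfl⟩ : ∃ t, n = t + 1 := ⟨n - 1, (Nat.succ_pred_eq_of_pos hn).symm⟩
  have hψ : ψ₀ = prodVec (t+1) 0 D := rfl
  rw [hψ, ← Matrix.mulVec_mulVec, wpd_state (t+1) θ φ U D t (Nat.lt_succ_self t),
    mulVec_sum']
  simp only [mulVec_smul, pb_apply, Finset.smul_sum, smul_smul]
  conv_rhs => rw [sum_snoc]
  apply Finset.sum_congr rfl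
  intro jt _
  apply Finset.sum_congr rfl
  intro b _
  congr 1
  · rw [snoc_zero', coef_snoc]
    simp only [Kcoef]
    ring
  · show prodVec (t+1) b _ =
      prodVec (t+1) ((Fin.snoc jt b : Fin (t+2) → Fin 2) (Fin.last (t+1)))
        (fun k => U ((k : ℕ) + 1) ((Fin.snoc jt b : Fin (t+2) → Fin 2) k.castSucc) *ᵥ D k)
    refine prodVec_ext (t+1) (by rw [Fin.snoc_last]) ?_
    intro k
    rw [dif_pos k.isLt, Fin.snoc_castSucc]
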